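/- arXiv:math/0010092 — 3 statements merged into one kernel-verified Lean document; each statement's English description precedes it below -/
import Mathlib

section
/- Let P₁, P₂ be finite bounded posets with |P₁|, |P₂| > 2, and Q the poset (P₁ \ {0̂₁,1̂₁}) × (P₂ \ {0̂₂,1̂₂}) with new least and greatest elements adjoined. Let A be a nonempty subset of Q \ {0̂_Q, 1̂_Q} with projections A↾₁, A↾₂. If min I(P₁,A↾₁) = {1̂₁} or min I(P₂,A↾₂) = {1̂₂}, then I(Q,A) = {1̂_Q}. -/
open scoped Classical
open Set

/-- The order filter generated by a subset. -/
def upFilter (P : Type*) [Preorder P] (S : Set P) : Set P := {x | ∃ s ∈ S, s ≤ x}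

/-- The set of minimal elements of a subset. -/
def minsOf (P : Type*) [Preorder P] (S : Set P) : Set P := {x | Minimal (· ∈ S) x}

/-- The set of intersecters for `A` in `P`. -/
def inters (P : Type*) [PartialOrder P] [OrderBot P] (A : Set P) : Set P :=
  if A = ∅ then Set.univ
  else if A = {(⊥ : P)} then ∅
  else {b | ∀ a ∈ A, a ≠ ⊥ → ∃ z : P, IsAtom z ∧ z ≤ b ∧ z ≤ a}

/-- The set of complementers for `A` in `P`. -/
def compls (P : Type*) [PartialOrder P] [OrderBot P] (A : Set P) : Set P := (inters P A)ᶜ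

/-- The blocker map: the set of minimal intersecters for `A` in `P`. -/
def bmap (P : Type*) [PartialOrder P] [OrderBot P] (A : Set P) : Set P := minsOf P (inters P A)

/-- Interior of a bounded poset: elements distinct from bottom and top. -/
abbrev Interior (P : Type*) [PartialOrder P] [BoundedOrder P] : Type _ :=
  {x : P // x ≠ ⊥ ∧ x ≠ ⊤}

/-- The product of the interiors of two bounded posets, with new least and
greatest elements adjoined. -/
abbrev TruncProd (P₁ P₂ : Type*) [PartialOrder P₁] [BoundedOrder P₁]
    [PartialOrder P₂] [BoundedOrder P₂] : Type _ :=
  WithBot (WithTop (Interior P₁ × Interior P₂))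

/-- Embedding of interior pairs into the truncated product. -/
def emb (P₁ P₂ : Type*) [PartialOrder P₁] [BoundedOrder P₁]
    [PartialOrder P₂] [BoundedOrder P₂] :
    Interior P₁ × Interior P₂ → TruncProd P₁ P₂ :=
  fun p => ((p : WithTop (Interior P₁ × Interior P₂)) : TruncProd P₁ P₂)


section Aux

lemma exists_interior {P : Type*} [PartialOrder P] [BoundedOrder P] [Fintype P]
    (hc : 2 < Fintype.card P) : ∃ x : P, x ≠ ⊥ ∧ x ≠ ⊤ := by
  by_contra hcon
  push_neg at hcon
  have hsub : (Finset.univ : Finset P) ⊆ {⊥, ⊤} := by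
    intro x _
    rcases eq_or_ne x ⊥ with h | h
    · simp [h]
    · simp [hcon x h]
  have := Finset.card_le_card hsub
  have h2 : ({⊥, ⊤} : Finset P).card ≤ 2 := Finset.card_insert_le _ _ |>.trans (by simp)
  simp only [Finset.card_univ] at this
  omega

lemma atom_ne_top {P : Type*} [PartialOrder P] [BoundedOrder P] [Fintype P]
    (hc : 2 < Fintype.card P) {z : P} (hz : IsAtom z) : z ≠ ⊤ := by
  obtain ⟨x, hxb, hxt⟩ := exists_interior hc
  intro hzt
  exact hxb (hz.2 x (lt_of_le_of_ne le_top hxt |>.trans_eq hzt.symm))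

variable {P₁ P₂ : Type*} [PartialOrder P₁] [BoundedOrder P₁] [Fintype P₁]
  [PartialOrder P₂] [BoundedOrder P₂] [Fintype P₂]

lemma emb_le_emb {p q : Interior P₁ × Interior P₂} :
    emb P₁ P₂ p ≤ emb P₁ P₂ q ↔ p.1.1 ≤ q.1.1 ∧ p.2.1 ≤ q.2.1 := by
  simp [emb, Prod.le_def, Subtype.coe_le_coe]

lemma isAtom_emb_of {p : Interior P₁ × Interior P₂} (h1 : IsAtom p.1.1) (h2 : IsAtom p.2.1) :
    IsAtom (emb P₁ P₂ p) := by
  constructor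
  · exact WithBot.coe_ne_bot
  · intro y hy
    induction y using WithBot.recBotCoe with
    | bot => rfl
    | coe w =>
      exfalso
      rw [show emb P₁ P₂ p = ((p : WithTop (Interior P₁ × Interior P₂)) : TruncProd P₁ P₂) from rfl, WithBot.coe_lt_coe] at hy
      induction w using WithTop.recTopCoe with
      | top => exact absurd hy (by simp)
      | coe q =>
        rw [WithTop.coe_lt_coe] at hy
        have hq1 : q.1.1 ≤ p.1.1 := Subtype.coe_le_coe.mpr hy.le.1
        have hq2 : q.2.1 ≤ p.2.1 := Subtype.coe_le_coe.mpr hy.le.2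
        have e1 : q.1.1 = p.1.1 := (h1.le_iff.mp hq1).resolve_left q.1.2.1
        have e2 : q.2.1 = p.2.1 := (h2.le_iff.mp hq2).resolve_left q.2.2.1
        have : q = p := Prod.ext (Subtype.ext e1) (Subtype.ext e2)
        exact hy.ne this

lemma atom_decomp {z : TruncProd P₁ P₂} (hz : IsAtom z) {p : Interior P₁ × Interior P₂}
    (hle : z ≤ emb P₁ P₂ p) :
    ∃ q : Interior P₁ × Interior P₂, z = emb P₁ P₂ q ∧ IsAtom q.1.1 ∧ IsAtom q.2.1 := by
  induction z using WithBot.recBotCoe with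
  | bot => exact absurd rfl hz.1
  | coe w =>
    rw [show emb P₁ P₂ p = ((p : WithTop (Interior P₁ × Interior P₂)) : TruncProd P₁ P₂) from rfl, WithBot.coe_le_coe] at hle
    induction w using WithTop.recTopCoe with
    | top => exact absurd hle (by simp)
    | coe q =>
      refine ⟨q, rfl, ⟨q.1.2.1, ?_⟩, ⟨q.2.2.1, ?_⟩⟩
      · intro y hy
        by_contra hyb
        have hyt : y ≠ ⊤ := by rintro rfl; exact not_top_lt hy
        have : emb P₁ P₂ (⟨y, hyb, hyt⟩, q.2) < emb P₁ P₂ q := by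
          simp only [emb, WithBot.coe_lt_coe, WithTop.coe_lt_coe]
          exact Prod.mk_lt_mk.mpr (Or.inl ⟨Subtype.mk_lt_mk.mpr hy, le_refl _⟩)
        exact WithBot.coe_ne_bot (hz.2 _ this)
      · intro y hy
        by_contra hyb
        have hyt : y ≠ ⊤ := by rintro rfl; exact not_top_lt hy
        have : emb P₁ P₂ (q.1, ⟨y, hyb, hyt⟩) < emb P₁ P₂ q := by
          simp only [emb, WithBot.coe_lt_coe, WithTop.coe_lt_coe]
          exact Prod.mk_lt_mk.mpr (Or.inr ⟨le_refl _, Subtype.mk_lt_mk.mpr hy⟩)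
        exact WithBot.coe_ne_bot (hz.2 _ this)

lemma mem_decomp {a : TruncProd P₁ P₂} (hb : a ≠ ⊥) (ht : a ≠ ⊤) :
    ∃ p : Interior P₁ × Interior P₂, a = emb P₁ P₂ p := by
  induction a using WithBot.recBotCoe with
  | bot => exact absurd rfl hb
  | coe w =>
    induction w using WithTop.recTopCoe with
    | top => exact absurd rfl ht
    | coe q => exact ⟨q, rfl⟩

lemma exists_min_le {P : Type*} [PartialOrder P] [Fintype P] {S : Set P} {b : P}
    (hb : b ∈ S) : ∃ m, m ≤ b ∧ Minimal (· ∈ S) m := by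
  classical
  obtain ⟨m, hm, hmin⟩ := Finset.exists_minimal
    (s := Finset.univ.filter (fun x => x ∈ S ∧ x ≤ b)) ⟨b, by simp [hb]⟩
  simp only [Finset.mem_filter, Finset.mem_univ, true_and] at hm hmin
  refine ⟨m, hm.2, hm.1, fun y hy hle => ?_⟩
  rcases eq_or_lt_of_le hle with e | hlt
  · exact e.ge
  · exact hmin ⟨hy, hle.trans hm.2⟩ hlt.le

end Aux

theorem stmt_8 {P₁ P₂ : Type*}
    [PartialOrder P₁] [BoundedOrder P₁] [Fintype P₁]
    [PartialOrder P₂] [BoundedOrder P₂] [Fintype P₂]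
    (hc1 : 2 < Fintype.card P₁) (hc2 : 2 < Fintype.card P₂)
    (A : Set (TruncProd P₁ P₂)) (hA : A.Nonempty)
    (hA' : ∀ q ∈ A, q ≠ ⊥ ∧ q ≠ ⊤)
    (A1 : Set P₁)
    (hA1 : A1 = {a₁ : P₁ | ∃ p : Interior P₁ × Interior P₂, emb P₁ P₂ p ∈ A ∧ p.1.1 = a₁})
    (A2 : Set P₂)
    (hA2 : A2 = {a₂ : P₂ | ∃ p : Interior P₁ × Interior P₂, emb P₁ P₂ p ∈ A ∧ p.2.1 = a₂})
    (h : minsOf P₁ (inters P₁ A1) = {(⊤ : P₁)} ∨ minsOf P₂ (inters P₂ A2) = {(⊤ : P₂)}) :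
    inters (TruncProd P₁ P₂) A = {(⊤ : TruncProd P₁ P₂)} := by
  classical
  have hAne : A ≠ ∅ := hA.ne_empty
  have hAbot : A ≠ {⊥} := by
    intro e
    exact (hA' ⊥ (by simp [e])).1 rfl
  have hdec : ∀ a ∈ A, ∃ p, a = emb P₁ P₂ p := fun a ha =>
    mem_decomp (hA' a ha).1 (hA' a ha).2
  rw [inters, if_neg hAne, if_neg hAbot]
  ext b
  simp only [Set.mem_setOf_eq, Set.mem_singleton_iff]
  constructor
  · intro hb
    by_contra hbt
    have hbb : b ≠ ⊥ := by
      rintro rfl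
      obtain ⟨a, ha⟩ := hA
      obtain ⟨z, hz, hzb, _⟩ := hb a ha (hA' a ha).1
      exact hz.1 (le_bot_iff.mp hzb)
    obtain ⟨p, rfl⟩ := mem_decomp hbb hbt
    rcases h with h1 | h2
    · have hA1ne : A1 ≠ ∅ := by
        obtain ⟨a, ha⟩ := hA
        obtain ⟨q, rfl⟩ := hdec a ha
        exact Set.nonempty_iff_ne_empty.mp ⟨q.1.1, hA1 ▸ ⟨q, ha, rfl⟩⟩
      have hA1bot : A1 ≠ {⊥} := by
        intro e
        have hmem : (⊥ : P₁) ∈ A1 := by simp [e]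
        rw [hA1] at hmem
        obtain ⟨q, _, hq⟩ := hmem
        exact q.1.2.1 hq
      have hmem : p.1.1 ∈ inters P₁ A1 := by
        rw [inters, if_neg hA1ne, if_neg hA1bot]
        intro a₁ ha₁ _
        rw [hA1] at ha₁
        obtain ⟨q, hqA, rfl⟩ := ha₁
        obtain ⟨z, hz, hzb, hza⟩ := hb _ hqA WithBot.coe_ne_bot
        obtain ⟨r, rfl, hr1, -⟩ := atom_decomp hz hza
        exact ⟨r.1.1, hr1, (emb_le_emb.mp hzb).1, (emb_le_emb.mp hza).1⟩
      obtain ⟨m, hmle, hmin⟩ := exists_min_le hmem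
      have hmt : m = ⊤ := by
        have : m ∈ minsOf P₁ (inters P₁ A1) := hmin
        rw [h1] at this
        exact this
      exact p.1.2.2 (top_le_iff.mp (hmt ▸ hmle))
    · have hA2ne : A2 ≠ ∅ := by
        obtain ⟨a, ha⟩ := hA
        obtain ⟨q, rfl⟩ := hdec a ha
        exact Set.nonempty_iff_ne_empty.mp ⟨q.2.1, hA2 ▸ ⟨q, ha, rfl⟩⟩
      have hA2bot : A2 ≠ {⊥} := by
        intro e
        have hmem : (⊥ : P₂) ∈ A2 := by simp [e]
        rw [hA2] at hmem
        obtain ⟨q, _, hq⟩ := hmem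
        exact q.2.2.1 hq
      have hmem : p.2.1 ∈ inters P₂ A2 := by
        rw [inters, if_neg hA2ne, if_neg hA2bot]
        intro a₂ ha₂ _
        rw [hA2] at ha₂
        obtain ⟨q, hqA, rfl⟩ := ha₂
        obtain ⟨z, hz, hzb, hza⟩ := hb _ hqA WithBot.coe_ne_bot
        obtain ⟨r, rfl, -, hr2⟩ := atom_decomp hz hza
        exact ⟨r.2.1, hr2, (emb_le_emb.mp hzb).2, (emb_le_emb.mp hza).2⟩
      obtain ⟨m, hmle, hmin⟩ := exists_min_le hmem
      have hmt : m = ⊤ := by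
        have : m ∈ minsOf P₂ (inters P₂ A2) := hmin
        rw [h2] at this
        exact this
      exact p.2.2.2 (top_le_iff.mp (hmt ▸ hmle))
  · rintro rfl
    intro a ha _
    obtain ⟨q, rfl⟩ := hdec a ha
    obtain ⟨z₁, hz₁, hz₁le⟩ := (eq_bot_or_exists_atom_le q.1.1).resolve_left q.1.2.1
    obtain ⟨z₂, hz₂, hz₂le⟩ := (eq_bot_or_exists_atom_le q.2.1).resolve_left q.2.2.1
    exact ⟨emb P₁ P₂ (⟨z₁, hz₁.1, atom_ne_top hc1 hz₁⟩, ⟨z₂, hz₂.1, atom_ne_top hc2 hz₂⟩),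
      isAtom_emb_of hz₁ hz₂, le_top, emb_le_emb.mpr ⟨hz₁le, hz₂le⟩⟩
end

section
/- Let P be a finite bounded poset with |P| > 1 and b the blocker map on Ant(P). For each B in the image Antb(P) of b, the preimage b⁻¹(B) = {A ∈ Ant(P) : b(A) = B} is closed under the join of the lattice Ant(P): if b(A₁) = b(A₂) = B then b(A₁ ∨ A₂) = B, where A₁ ∨ A₂ = min(A₁ ∪ A₂). -/
open scoped Classical
open Set

section Aux

variable {P : Type*} [PartialOrder P] [OrderBot P]

lemma inters_upclosed (A : Set P) {x y : P} (hx : x ∈ inters P A) (hxy : x ≤ y) :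
    y ∈ inters P A := by
  unfold inters at *
  split_ifs at * with h1 h2
  · trivial
  · exact hx
  · intro a ha hane
    obtain ⟨z, hz, hzx, hza⟩ := hx a ha hane
    exact ⟨z, hz, hzx.trans hxy, hza⟩

lemma inters_eq_upFilter_bmap [Fintype P] (A : Set P) :
    inters P A = upFilter P (bmap P A) := by
  ext x
  constructor
  · intro hx
    obtain ⟨b, hbx, hb⟩ := exists_minimal_le_of_wellFoundedLT (· ∈ inters P A) _ hx
    exact ⟨b, hb, hbx⟩
  · rintro ⟨s, hs, hsx⟩
    exact inters_upclosed A hs.prop hsx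

lemma minsOf_univ_eq : minsOf P univ = {(⊥ : P)} := by
  ext x
  simp only [minsOf, mem_setOf_eq, mem_singleton_iff]
  constructor
  · intro hx
    exact le_antisymm (hx.2 (mem_univ ⊥) bot_le) bot_le
  · rintro rfl
    exact ⟨mem_univ _, fun y _ _ => bot_le⟩

lemma minsOf_empty : minsOf P (∅ : Set P) = ∅ := by
  ext x; simp [minsOf, Minimal]

-- antichain A containing ⊥ is {⊥}
lemma antichain_bot {A : Set P} (h : IsAntichain (· ≤ ·) A) (hbot : ⊥ ∈ A)
    {a : P} (ha : a ∈ A) : a = ⊥ := by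
  by_contra hne
  exact h hbot ha (fun e => hne e.symm) bot_le

lemma exists_ne_bot {A : Set P} (hne : A ≠ ∅) (hA : A ≠ {⊥}) : ∃ a ∈ A, a ≠ ⊥ := by
  by_contra hc
  push_neg at hc
  apply hA
  ext x
  constructor
  · intro hx; exact hc x hx
  · rintro rfl
    obtain ⟨a, ha⟩ := nonempty_iff_ne_empty.mpr hne
    have := hc a ha; rwa [this] at ha

-- if bmap A ∋ ⊥ and A antichain then A = ∅
lemma bmap_bot_mem [Fintype P] {A : Set P} (hA : IsAntichain (· ≤ ·) A)
    (h : ⊥ ∈ bmap P A) : A = ∅ := by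
  by_contra hne
  have hbot : ⊥ ∈ inters P A := h.prop
  rw [inters, if_neg hne] at hbot
  by_cases hA1 : A = {⊥}
  · rw [if_pos hA1] at hbot
    exact hbot
  · rw [if_neg hA1] at hbot
    obtain ⟨a, ha, hane⟩ := exists_ne_bot hne hA1
    obtain ⟨z, hz, hzb, _⟩ := hbot a ha hane
    exact hz.1 (le_bot_iff.mp hzb)

-- if bmap A = ∅ and A antichain then A = {⊥}
lemma bmap_eq_empty [Fintype P] [BoundedOrder P] {A : Set P} (hA : IsAntichain (· ≤ ·) A)
    (h : bmap P A = ∅) : A = {⊥} := by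
  by_contra hA1
  have hne : A ≠ ∅ := by
    rintro rfl
    rw [bmap, inters, if_pos rfl, minsOf_univ_eq] at h
    exact (singleton_ne_empty _) h
  -- show ⊤ ∈ inters P A, then inters nonempty has a minimal element
  have htop : (⊤ : P) ∈ inters P A := by
    rw [inters, if_neg hne, if_neg hA1]
    intro a ha hane
    obtain ⟨z, hz, hza⟩ := (eq_bot_or_exists_atom_le a).resolve_left hane
    exact ⟨z, hz, le_top, hza⟩
  obtain ⟨b, _, hb⟩ := exists_minimal_le_of_wellFoundedLT (· ∈ inters P A) _ htop
  have : b ∈ bmap P A := hb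
  rw [h] at this
  exact this

end Aux

theorem stmt_14 {P : Type*} [PartialOrder P] [BoundedOrder P] [Fintype P] [Nontrivial P]
    (B A₁ A₂ : Set P) (h1 : IsAntichain (· ≤ ·) A₁) (h2 : IsAntichain (· ≤ ·) A₂)
    (hB1 : bmap P A₁ = B) (hB2 : bmap P A₂ = B) :
    bmap P (minsOf P (A₁ ∪ A₂)) = B := by
  by_cases hE1 : A₁ = ∅
  · -- B = {⊥}, so A₂ = ∅
    subst hE1
    have hBval : B = {⊥} := by
      rw [← hB1, bmap, inters, if_pos rfl, minsOf_univ_eq]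
    have hA2 : A₂ = ∅ := bmap_bot_mem h2 (by rw [hB2, hBval]; rfl)
    subst hA2
    simpa [minsOf_empty] using hB1
  by_cases hE2 : A₂ = ∅
  · subst hE2
    have hBval : B = {⊥} := by
      rw [← hB2, bmap, inters, if_pos rfl, minsOf_univ_eq]
    have hA1 : A₁ = ∅ := bmap_bot_mem h1 (by rw [hB1, hBval]; rfl)
    exact absurd hA1 hE1
  by_cases hS1 : A₁ = {⊥}
  · subst hS1
    have hBval : B = ∅ := by
      rw [← hB1, bmap, inters, if_neg hE1, if_pos rfl, minsOf_empty]
    have hA2 : A₂ = {⊥} := bmap_eq_empty h2 (hB2.trans hBval)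
    subst hA2
    have : ({⊥} : Set P) ∪ {⊥} = {⊥} := union_self _
    rw [this]
    have hm : minsOf P ({⊥} : Set P) = {⊥} := by
      ext x
      simp only [minsOf, mem_setOf_eq, mem_singleton_iff]
      constructor
      · intro hx; exact hx.prop
      · rintro rfl; exact ⟨rfl, fun y hy _ => hy.ge⟩
    rw [hm, bmap, inters, if_neg (singleton_ne_empty _), if_pos rfl, minsOf_empty, hBval]
  by_cases hS2 : A₂ = {⊥}
  · subst hS2
    have hBval : B = ∅ := by
      rw [← hB2, bmap, inters, if_neg hE2, if_pos rfl, minsOf_empty]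
    exact absurd (bmap_eq_empty h1 (hB1.trans hBval)) hS1
  -- main case
  have hbot1 : (⊥ : P) ∉ A₁ := fun hb => hS1 (by
    ext x; simp only [mem_singleton_iff]
    exact ⟨fun hx => antichain_bot h1 hb hx, fun hx => hx ▸ hb⟩)
  have hbot2 : (⊥ : P) ∉ A₂ := fun hb => hS2 (by
    ext x; simp only [mem_singleton_iff]
    exact ⟨fun hx => antichain_bot h2 hb hx, fun hx => hx ▸ hb⟩)
  set C := minsOf P (A₁ ∪ A₂) with hC
  have hCsub : C ⊆ A₁ ∪ A₂ := fun x hx => hx.prop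
  have hCne : C ≠ ∅ := by
    obtain ⟨a, ha⟩ := nonempty_iff_ne_empty.mpr hE1
    obtain ⟨b, _, hb⟩ := exists_minimal_le_of_wellFoundedLT (· ∈ A₁ ∪ A₂) _ (Or.inl ha : a ∈ A₁ ∪ A₂)
    exact nonempty_iff_ne_empty.mp ⟨b, hb⟩
  have hCS : C ≠ {⊥} := by
    intro h
    have : (⊥ : P) ∈ C := h ▸ rfl
    rcases hCsub this with h' | h'
    · exact hbot1 h'
    · exact hbot2 h'
  have hIC : inters P C = inters P A₁ ∩ inters P A₂ := by
    have key : ∀ (A : Set P), A ⊆ A₁ ∪ A₂ → ∀ b ∈ inters P C, b ∈ inters P A ∨ A = ∅ ∨ A = {⊥} := by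
      intro A hAsub b hb
      by_cases hAe : A = ∅
      · exact Or.inr (Or.inl hAe)
      by_cases hAs : A = {⊥}
      · exact Or.inr (Or.inr hAs)
      left
      rw [inters, if_neg hAe, if_neg hAs]
      intro a ha hane
      obtain ⟨m, hma, hm⟩ := exists_minimal_le_of_wellFoundedLT (· ∈ A₁ ∪ A₂) _ (hAsub ha)
      have hmC : m ∈ C := hm
      have hmne : m ≠ ⊥ := by
        intro h
        rcases hm.prop with h' | h'
        · exact hbot1 (h ▸ h')
        · exact hbot2 (h ▸ h')
      rw [inters, if_neg hCne, if_neg hCS] at hb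
      obtain ⟨z, hz, hzb, hzm⟩ := hb m hmC hmne
      exact ⟨z, hz, hzb, hzm.trans hma⟩
    ext b
    constructor
    · intro hb
      constructor
      · rcases key A₁ subset_union_left b hb with h | h | h
        · exact h
        · exact absurd h hE1
        · exact absurd h hS1
      · rcases key A₂ subset_union_right b hb with h | h | h
        · exact h
        · exact absurd h hE2
        · exact absurd h hS2
    · rintro ⟨hb1, hb2⟩
      rw [inters, if_neg hCne, if_neg hCS]
      intro a ha hane
      rcases hCsub ha with h' | h'
      · rw [inters, if_neg hE1, if_neg hS1] at hb1
        exact hb1 a h' hane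
      · rw [inters, if_neg hE2, if_neg hS2] at hb2
        exact hb2 a h' hane
  have hI12 : inters P A₁ = inters P A₂ := by
    rw [inters_eq_upFilter_bmap, inters_eq_upFilter_bmap, hB1, hB2]
  rw [bmap, hIC, ← hI12, inter_self, ← bmap, hB1]
end

section
/- Let P be a finite bounded poset with |P| > 1. In the lattice Antb(P) of blockers, the least element is the empty antichain, the greatest element is {0̂}, the unique coatom is the set Pᵃ of atoms of P, and the unique atom is b(Pᵃ). -/
open scoped Classical
open Set

/-- The set of blockers in `P`: the image of the blocker map on antichains. -/
def Antb (P : Type*) [PartialOrder P] [OrderBot P] : Set (Set P) :=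
  bmap P '' {A : Set P | IsAntichain (· ≤ ·) A}

set_option linter.unusedSectionVars false

section helpers

variable {P : Type*} [PartialOrder P] [BoundedOrder P] [Fintype P] [Nontrivial P]

lemma atom_below {b : P} (hb : b ≠ ⊥) : ∃ z : P, IsAtom z ∧ z ≤ b := by
  rcases (IsAtomic.eq_bot_or_exists_atom_le b) with h | h
  · exact absurd h hb
  · exact h

lemma exists_min_le_s18 {S : Set P} {x : P} (hx : x ∈ S) : ∃ m ∈ minsOf P S, m ≤ x := by
  obtain ⟨m, hm, hmin⟩ := Set.Finite.exists_minimalFor id {y ∈ S | y ≤ x}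
    (Set.toFinite _) ⟨x, hx, le_rfl⟩
  refine ⟨m, ⟨hm.1, fun y hy hym => ?_⟩, hm.2⟩
  exact hmin ⟨hy, hym.trans hm.2⟩ hym

lemma bmap_empty : bmap P (∅ : Set P) = {⊥} := by
  have h : inters P (∅ : Set P) = Set.univ := by simp [inters]
  ext x
  simp only [bmap, minsOf, h, Set.mem_setOf_eq, Set.mem_singleton_iff]
  constructor
  · intro hx
    exact le_antisymm (hx.2 (Set.mem_univ ⊥) bot_le) bot_le
  · rintro rfl
    exact ⟨Set.mem_univ _, fun y _ _ => bot_le⟩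

lemma bmap_bot : bmap P ({(⊥ : P)} : Set P) = ∅ := by
  have h : inters P ({(⊥ : P)} : Set P) = ∅ := by
    simp [inters, Set.singleton_nonempty (⊥ : P), Set.singleton_ne_empty]
  simp [bmap, minsOf, h, Minimal]

lemma bmap_top : bmap P ({(⊤ : P)} : Set P) = {z : P | IsAtom z} := by
  have h1 : ({(⊤ : P)} : Set P) ≠ ∅ := Set.singleton_ne_empty _
  have h2 : ({(⊤ : P)} : Set P) ≠ {(⊥ : P)} := by
    intro h
    exact top_ne_bot (Set.singleton_eq_singleton_iff.mp h)
  have h : inters P ({(⊤ : P)} : Set P) = {b : P | ∃ z : P, IsAtom z ∧ z ≤ b} := by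
    simp only [inters, if_neg h1, if_neg h2]
    ext b
    constructor
    · intro hb
      obtain ⟨z, hz, hzb, _⟩ := hb ⊤ rfl top_ne_bot
      exact ⟨z, hz, hzb⟩
    · rintro ⟨z, hz, hzb⟩ a ha _
      exact ⟨z, hz, hzb, (Set.mem_singleton_iff.mp ha) ▸ le_top⟩
  ext x
  simp only [bmap, minsOf, h, Set.mem_setOf_eq]
  constructor
  · rintro ⟨⟨z, hz, hzx⟩, hmin⟩
    have : x ≤ z := hmin ⟨z, hz, le_rfl⟩ hzx
    exact le_antisymm this hzx ▸ hz
  · intro hx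
    refine ⟨⟨x, hx, le_rfl⟩, fun y hy hyx => ?_⟩
    obtain ⟨z, hz, hzy⟩ := hy
    have hzx : z ≤ x := hzy.trans hyx
    rcases hzx.lt_or_eq with h | h
    · exact absurd (hx.2 _ h) hz.1
    · exact h ▸ hzy

lemma atoms_antichain : IsAntichain (· ≤ ·) {z : P | IsAtom z} := by
  intro a ha b hb hab hle
  rcases hle.lt_or_eq with h | h
  · exact (ha.1 : a ≠ ⊥) (hb.2 _ h) |>.elim
  · exact hab h

lemma atom_le_of_le_atom {z a : P} (hz : IsAtom z) (ha : IsAtom a) (h : z ≤ a) : z = a := by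
  rcases h.lt_or_eq with h | h
  · exact absurd (ha.2 _ h) hz.1
  · exact h

end helpers

theorem stmt_18 {P : Type*} [PartialOrder P] [BoundedOrder P] [Fintype P] [Nontrivial P] :
    -- least element: the empty antichain
    (∅ : Set P) ∈ Antb P ∧
    (∀ B ∈ Antb P, upFilter P (∅ : Set P) ⊆ upFilter P B) ∧
    -- greatest element: {⊥}
    ({(⊥ : P)} : Set P) ∈ Antb P ∧
    (∀ B ∈ Antb P, upFilter P B ⊆ upFilter P ({(⊥ : P)} : Set P)) ∧
    -- unique coatom: the set of atoms of P
    {z : P | IsAtom z} ∈ Antb P ∧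
    {z : P | IsAtom z} ≠ ({(⊥ : P)} : Set P) ∧
    (∀ B ∈ Antb P, B ≠ ({(⊥ : P)} : Set P) → upFilter P B ⊆ upFilter P {z : P | IsAtom z}) ∧
    -- unique atom: the blocker of the set of atoms of P
    bmap P {z : P | IsAtom z} ∈ Antb P ∧
    bmap P {z : P | IsAtom z} ≠ (∅ : Set P) ∧
    (∀ B ∈ Antb P, B ≠ (∅ : Set P) →
      upFilter P (bmap P {z : P | IsAtom z}) ⊆ upFilter P B) := by
  have hAtomsNeBot : {z : P | IsAtom z} ≠ ({(⊥ : P)} : Set P) := by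
    intro h
    have : IsAtom (⊥ : P) := by
      have : (⊥ : P) ∈ {z : P | IsAtom z} := h ▸ rfl
      exact this
    exact this.1 rfl
  have hAtomsNeEmpty : {z : P | IsAtom z} ≠ (∅ : Set P) := by
    obtain ⟨x, hx⟩ := exists_ne (⊥ : P)
    obtain ⟨z, hz, _⟩ := atom_below hx
    intro h
    exact absurd (h ▸ hz : z ∈ (∅ : Set P)) (Set.notMem_empty z)
  have hIntersAtoms : inters P {z : P | IsAtom z} =
      {b : P | ∀ a : P, IsAtom a → a ≤ b} := by
    simp only [inters, if_neg hAtomsNeEmpty, if_neg hAtomsNeBot]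
    ext b
    constructor
    · intro hb a ha
      obtain ⟨z, hz, hzb, hza⟩ := hb a ha ha.1
      exact (atom_le_of_le_atom hz ha hza) ▸ hzb
    · intro hb a ha _
      exact ⟨a, ha, hb a ha, le_rfl⟩
  have hTopInters : (⊤ : P) ∈ inters P {z : P | IsAtom z} := by
    rw [hIntersAtoms]; intro a _; exact le_top
  refine ⟨?_, ?_, ?_, ?_, ?_, hAtomsNeBot, ?_, ?_, ?_, ?_⟩
  · -- ∅ ∈ Antb
    exact ⟨{(⊥ : P)}, Set.subsingleton_singleton.isAntichain _, bmap_bot⟩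
  · -- least
    rintro B _ x ⟨s, hs, _⟩
    exact absurd hs (Set.notMem_empty s)
  · -- {⊥} ∈ Antb
    exact ⟨∅, Set.subsingleton_empty.isAntichain _, bmap_empty⟩
  · -- greatest
    rintro B _ x _
    exact ⟨⊥, rfl, bot_le⟩
  · -- atoms ∈ Antb
    exact ⟨{(⊤ : P)}, Set.subsingleton_singleton.isAntichain _, bmap_top⟩
  · -- coatom property
    rintro B ⟨A, hA, rfl⟩ hBne x ⟨b, hb, hbx⟩
    by_cases hA0 : A = ∅
    · exact absurd (hA0 ▸ bmap_empty) hBne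
    by_cases hA1 : A = {(⊥ : P)}
    · subst hA1
      rw [bmap_bot] at hb
      exact absurd hb (Set.notMem_empty b)
    · have hbI : b ∈ inters P A := hb.1
      rw [inters, if_neg hA0, if_neg hA1] at hbI
      obtain ⟨a, ha, hane⟩ : ∃ a ∈ A, a ≠ ⊥ := by
        by_contra h
        push_neg at h
        apply hA1
        ext y
        constructor
        · intro hy; exact h y hy
        · rintro rfl
          obtain ⟨w, hw⟩ := Set.nonempty_iff_ne_empty.mpr hA0
          exact (h w hw) ▸ hw
      obtain ⟨z, hz, hzb, _⟩ := hbI a ha hane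
      exact ⟨z, hz, hzb.trans hbx⟩
  · -- bmap atoms ∈ Antb
    exact ⟨{z : P | IsAtom z}, atoms_antichain, rfl⟩
  · -- bmap atoms ≠ ∅
    obtain ⟨m, hm, _⟩ := exists_min_le_s18 hTopInters
    intro h
    exact absurd (h ▸ hm : m ∈ (∅ : Set P)) (Set.notMem_empty m)
  · -- atom property
    rintro B ⟨A, hA, rfl⟩ hBne x ⟨m, hm, hmx⟩
    have hall : ∀ a : P, IsAtom a → a ≤ x := by
      intro a ha
      have := hm.1
      rw [hIntersAtoms] at this
      exact (this a ha).trans hmx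
    by_cases hA0 : A = ∅
    · subst hA0
      rw [bmap_empty]
      exact ⟨⊥, rfl, bot_le⟩
    by_cases hA1 : A = {(⊥ : P)}
    · exact absurd (hA1 ▸ bmap_bot) hBne
    · have hxI : x ∈ inters P A := by
        rw [inters, if_neg hA0, if_neg hA1]
        intro a _ hane
        obtain ⟨z, hz, hza⟩ := atom_below hane
        exact ⟨z, hz, hall z hz, hza⟩
      obtain ⟨m', hm', hm'x⟩ := exists_min_le_s18 hxI
      exact ⟨m', hm', hm'x⟩
end
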